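/- Let q ∈ (0,1], p continuous and positive on [0,1], and suppose w ∈ C¹([0,1]) ∩ C²((0,1]) satisfies w > 0 on (0,1], w(1) > 0, and (p·w')' + w/x^{2−q} = 0 on (0,1]. If h ∈ H¹₀(0,1) satisfies ∫₀¹ p·(h')² = ∫₀¹ h²/x^{2−q}, then h = 0. -/

import Mathlib

open Real Set MeasureTheory

theorem equality_case_hardy (q : ℝ) (hq0 : 0 < q) (hq1 : q ≤ 1)
    (p w : ℝ → ℝ)
    (hp : ContinuousOn p (Set.Icc 0 1))
    (hppos : ∀ x ∈ Set.Icc (0:ℝ) 1, 0 < p x)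
    (hw1 : ContDiffOn ℝ 1 w (Set.Icc 0 1))
    (hw2 : ContDiffOn ℝ 2 w (Set.Ioc 0 1))
    (hwpos : ∀ x ∈ Set.Ioc (0:ℝ) 1, 0 < w x) (hw1pos : 0 < w 1)
    (heqw : ∀ x ∈ Set.Ioc (0:ℝ) 1,
      deriv (fun y => p y * deriv w y) x + w x / x ^ (2 - q) = 0)
    (h g : ℝ → ℝ) (h0 : h 0 = 0) (h1 : h 1 = 0)
    (hd : ∀ x ∈ Set.Icc (0:ℝ) 1, HasDerivAt h (g x) x)
    (hg : IntervalIntegrable (fun x => g x ^ 2) volume 0 1)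
    (heq : (∫ x in (0:ℝ)..1, p x * g x ^ 2)
      = ∫ x in (0:ℝ)..1, h x ^ 2 / x ^ (2 - q)) :
    ∀ x ∈ Set.Icc (0:ℝ) 1, h x = 0 := by
  -- notation
  set P : ℝ → ℝ := fun y => p y * deriv w y with hP_def
  -- measurability of g
  have hgm : AEStronglyMeasurable g (volume.restrict (Set.uIoc (0:ℝ) 1)) := by
    have huIoc : Set.uIoc (0:ℝ) 1 = Set.Ioc 0 1 := Set.uIoc_of_le zero_le_one
    rw [huIoc]
    refine ((measurable_deriv h).aestronglyMeasurable.restrict).congr ?_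
    filter_upwards [ae_restrict_mem measurableSet_Ioc] with x hx
    exact ((hd x ⟨hx.1.le, hx.2⟩).deriv)
  -- g is interval integrable
  have hgI : IntervalIntegrable g volume 0 1 := by
    refine IntervalIntegrable.mono_fun' (g := fun x => (1 + g x ^ 2) / 2) ?_ hgm ?_
    · exact (intervalIntegrable_const.add hg).div_const 2
    · refine Filter.Eventually.of_forall fun x => ?_
      have := sq_nonneg (|g x| - 1)
      simp only [Real.norm_eq_abs]
      nlinarith [sq_abs (g x), abs_nonneg (g x)]
  -- FTC: h ε = ∫_0^ε g
  have hFTC : ∀ ε ∈ Set.Icc (0:ℝ) 1, (∫ x in (0:ℝ)..ε, g x) = h ε := by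
    intro ε hε
    have hsub : Set.uIcc (0:ℝ) ε ⊆ Set.Icc 0 1 := by
      rw [Set.uIcc_of_le hε.1]
      exact Set.Icc_subset_Icc le_rfl hε.2
    have := intervalIntegral.integral_eq_sub_of_hasDerivAt
      (f := h) (f' := g) (fun x hx => hd x (hsub hx))
      (hgI.mono_set (by rw [Set.uIcc_of_le zero_le_one]; exact hsub))
    rw [this, h0, sub_zero]
  -- Cauchy–Schwarz : (h ε)^2 ≤ ε * ∫_0^ε g^2
  have hsub01 : ∀ ε ∈ Set.Ioc (0:ℝ) 1, Set.uIcc (0:ℝ) ε ⊆ Set.uIcc (0:ℝ) 1 := by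
    intro ε hε
    rw [Set.uIcc_of_le zero_le_one, Set.uIcc_of_le hε.1.le]
    exact Set.Icc_subset_Icc le_rfl hε.2
  have hCS : ∀ ε ∈ Set.Ioc (0:ℝ) 1, (h ε) ^ 2 ≤ ε * ∫ x in (0:ℝ)..ε, g x ^ 2 := by
    intro ε hε
    have hg1 : IntervalIntegrable g volume 0 ε := hgI.mono_set (hsub01 ε hε)
    have hg2 : IntervalIntegrable (fun x => g x ^ 2) volume 0 ε := hg.mono_set (hsub01 ε hε)
    set S := ∫ x in (0:ℝ)..ε, g x with hS
    set c : ℝ := S / ε with hc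
    have hnn : (0:ℝ) ≤ ∫ x in (0:ℝ)..ε, (g x - c) ^ 2 :=
      intervalIntegral.integral_nonneg hε.1.le (fun u _ => sq_nonneg _)
    have hexp : (∫ x in (0:ℝ)..ε, (g x - c) ^ 2)
        = (∫ x in (0:ℝ)..ε, g x ^ 2) - 2 * c * S + c ^ 2 * ε := by
      have e1 : ∀ x, (g x - c) ^ 2 = g x ^ 2 - (2*c) * g x + c ^ 2 := by intro x; ring
      simp only [e1]
      rw [intervalIntegral.integral_add ((hg2.sub (hg1.const_mul (2*c)))) intervalIntegrable_const,
        intervalIntegral.integral_sub hg2 (hg1.const_mul (2*c)),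
        intervalIntegral.integral_const_mul, intervalIntegral.integral_const]
      rw [← hS]; ring_nf
    rw [hexp] at hnn
    have hhe : h ε = S := (hFTC ε ⟨hε.1.le, hε.2⟩).symm
    have hε0 : (0:ℝ) < ε := hε.1
    have hS' : S = c * ε := by rw [hc]; field_simp
    rw [hhe]
    nlinarith [hnn, hε0, hS', sq_nonneg c]
  -- basic facts
  have huI : Set.uIcc (0:ℝ) 1 = Set.Icc 0 1 := Set.uIcc_of_le zero_le_one
  have hpg2 : IntervalIntegrable (fun x => p x * g x ^ 2) volume 0 1 :=
    hg.continuousOn_mul (by rw [huI]; exact hp)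
  have hhc : ∀ x ∈ Set.Icc (0:ℝ) 1, ContinuousAt h x :=
    fun x hx => (hd x hx).differentiableAt.continuousAt
  have hX : ∀ x : ℝ, 0 < x → 0 < x ^ (2 - q) := fun x hx => Real.rpow_pos_of_pos hx _
  have hPd : ∀ x ∈ Set.Ioc (0:ℝ) 1, HasDerivAt P (-(w x / x ^ (2 - q))) x := by
    intro x hx
    have hx0 := hX x hx.1
    have hwx := hwpos x hx
    by_cases hdiff : DifferentiableAt ℝ P x
    · have : deriv P x = -(w x / x ^ (2 - q)) := by
        have := heqw x hx; linarith
      exact this ▸ hdiff.hasDerivAt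
    · exfalso
      have h0' : deriv P x = 0 := deriv_zero_of_not_differentiableAt hdiff
      have := heqw x hx
      rw [h0', zero_add] at this
      have : w x = 0 := by
        field_simp at this; simpa using this
      linarith
  have hPc : ContinuousOn P (Set.Ioc 0 1) := fun x hx =>
    ((hPd x hx).differentiableAt.continuousAt).continuousWithinAt
  have hpne : ∀ x ∈ Set.Ioc (0:ℝ) 1, p x ≠ 0 :=
    fun x hx => (hppos x ⟨hx.1.le, hx.2⟩).ne'
  have hw'c : ContinuousOn (deriv w) (Set.Ioc 0 1) := by
    refine ContinuousOn.congr (f := fun x => P x / p x)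
      (hPc.div (hp.mono Set.Ioc_subset_Icc_self) hpne) ?_
    intro x hx
    simp only [hP_def]
    rw [mul_comm, mul_div_assoc, div_self (hpne x hx), mul_one]
  have hwD : ∀ x ∈ Set.Ioo (0:ℝ) 1, HasDerivAt w (deriv w x) x := by
    intro x hx
    have : DifferentiableWithinAt ℝ w (Set.Icc 0 1) x :=
      (hw1.differentiableOn one_ne_zero) x ⟨hx.1.le, hx.2.le⟩
    exact (this.differentiableAt (Icc_mem_nhds hx.1 hx.2)).hasDerivAt
  -- limit of P at 0+
  have hIoc_mem : Set.Ioc (0:ℝ) 1 ∈ nhdsWithin (0:ℝ) (Set.Ioi 0) :=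
    Ioc_mem_nhdsGT_of_mem ⟨le_rfl, zero_lt_one⟩
  have hIoo_mem : Set.Ioo (0:ℝ) 1 ∈ nhdsWithin (0:ℝ) (Set.Ioi 0) :=
    Ioo_mem_nhdsGT_of_mem ⟨le_rfl, zero_lt_one⟩
  have hIcc_mem : Set.Icc (0:ℝ) 1 ∈ nhdsWithin (0:ℝ) (Set.Ioi 0) :=
    Filter.mem_of_superset hIoc_mem Set.Ioc_subset_Icc_self
  set d : ℝ := derivWithin w (Set.Icc 0 1) 0 with hd_def
  have hdW : ContinuousOn (derivWithin w (Set.Icc 0 1)) (Set.Icc 0 1) :=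
    hw1.continuousOn_derivWithin (uniqueDiffOn_Icc zero_lt_one) le_rfl
  have hderiv_eq : ∀ x ∈ Set.Ioo (0:ℝ) 1, deriv w x = derivWithin w (Set.Icc 0 1) x :=
    fun x hx => (derivWithin_of_mem_nhds (Icc_mem_nhds hx.1 hx.2)).symm
  have hPtend : Filter.Tendsto P (nhdsWithin (0:ℝ) (Set.Ioi 0)) (nhds (p 0 * d)) := by
    have h1' : ContinuousWithinAt (fun x => p x * derivWithin w (Set.Icc 0 1) x)
        (Set.Icc 0 1) 0 :=
      (hp 0 ⟨le_rfl, zero_le_one⟩).mul (hdW 0 ⟨le_rfl, zero_le_one⟩)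
    have h2' : Filter.Tendsto (fun x => p x * derivWithin w (Set.Icc 0 1) x)
        (nhdsWithin (0:ℝ) (Set.Ioi 0)) (nhds (p 0 * d)) :=
      h1'.tendsto.mono_left (nhdsWithin_le_of_mem hIcc_mem)
    refine h2'.congr' ?_
    filter_upwards [hIoo_mem] with x hx
    simp only [hP_def, hderiv_eq x hx]
  -- w 0 is nonnegative
  have hwc0 : ContinuousWithinAt w (Set.Icc 0 1) 0 := hw1.continuousOn 0 ⟨le_rfl, zero_le_one⟩
  have hwtend : Filter.Tendsto w (nhdsWithin (0:ℝ) (Set.Ioi 0)) (nhds (w 0)) :=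
    hwc0.tendsto.mono_left (nhdsWithin_le_of_mem hIcc_mem)
  haveI hNB : (nhdsWithin (0:ℝ) (Set.Ioi 0)).NeBot := nhdsGT_neBot 0
  have hw0 : 0 ≤ w 0 := by
    refine ge_of_tendsto hwtend ?_
    filter_upwards [hIoc_mem] with x hx
    exact (hwpos x hx).le
  -- lower bound for w near 0
  have hlow : ∃ c > 0, ∀ᶠ x in nhdsWithin (0:ℝ) (Set.Ioi 0), c * x ≤ w x := by
    rcases eq_or_lt_of_le hw0 with hw00 | hw00
    · -- w 0 = 0 : show d > 0 first
      have hdpos : 0 < d := by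
        by_contra hd0
        push_neg at hd0
        have hPle : ∀ x ∈ Set.Ioc (0:ℝ) 1, P x ≤ p 0 * d := by
          intro x hx
          refine ge_of_tendsto hPtend ?_
          have : Set.Ioo (0:ℝ) x ∈ nhdsWithin (0:ℝ) (Set.Ioi 0) :=
            Ioo_mem_nhdsGT_of_mem ⟨le_rfl, hx.1⟩
          filter_upwards [this] with y hy
          have hanti : StrictAntiOn P (Set.Icc y 1) := by
            refine strictAntiOn_of_deriv_neg (convex_Icc _ _)
              (hPc.mono (fun z hz => ⟨lt_of_lt_of_le hy.1 hz.1, hz.2⟩)) ?_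
            intro z hz
            rw [interior_Icc] at hz
            have hz' : z ∈ Set.Ioc (0:ℝ) 1 := ⟨lt_trans hy.1 hz.1, hz.2.le⟩
            rw [(hPd z hz').deriv]
            have := hX z hz'.1
            have := hwpos z hz'
            have : 0 < w z / z ^ (2-q) := by positivity
            linarith
          exact (hanti ⟨le_rfl, le_trans hy.2.le hx.2⟩ ⟨hy.2.le, hx.2⟩ hy.2).le
        have hderivle : ∀ z ∈ interior (Set.Icc (0:ℝ) 1), deriv w z ≤ 0 := by
          intro z hz
          rw [interior_Icc] at hz
          have hz' : z ∈ Set.Ioc (0:ℝ) 1 := ⟨hz.1, hz.2.le⟩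
          have hPz : P z ≤ 0 :=
            le_trans (hPle z hz') (mul_nonpos_of_nonneg_of_nonpos
              (hppos 0 ⟨le_rfl, zero_le_one⟩).le hd0)
          have : deriv w z = P z / p z := by
            simp only [hP_def]
            rw [mul_comm, mul_div_assoc, div_self (hpne z hz'), mul_one]
          rw [this]
          exact div_nonpos_of_nonpos_of_nonneg hPz (hppos z ⟨hz.1.le, hz.2.le⟩).le
        have hanti : AntitoneOn w (Set.Icc (0:ℝ) 1) := by
          refine antitoneOn_of_deriv_nonpos (convex_Icc _ _) hw1.continuousOn ?_ hderivle
          rw [interior_Icc]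
          intro z hz
          exact ((hwD z hz).differentiableAt).differentiableWithinAt
        have : w 1 ≤ w 0 := hanti ⟨le_rfl, zero_le_one⟩ ⟨zero_le_one, le_rfl⟩ zero_le_one
        rw [← hw00] at this
        linarith
      -- slope of w at 0 tends to d
      have hwd0 : HasDerivWithinAt w d (Set.Icc 0 1) 0 :=
        (((hw1.differentiableOn one_ne_zero) 0 ⟨le_rfl, zero_le_one⟩)).hasDerivWithinAt
      rw [hasDerivWithinAt_iff_tendsto_slope] at hwd0
      have hslope : Filter.Tendsto (slope w 0) (nhdsWithin (0:ℝ) (Set.Ioi 0)) (nhds d) := by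
        refine hwd0.mono_left (nhdsWithin_le_of_mem ?_)
        refine Filter.mem_of_superset hIoc_mem ?_
        intro x hx
        exact ⟨⟨hx.1.le, hx.2⟩, (ne_of_gt hx.1)⟩
      refine ⟨d/2, by linarith, ?_⟩
      have hev : ∀ᶠ x in nhdsWithin (0:ℝ) (Set.Ioi 0), d/2 < slope w 0 x :=
        hslope.eventually (eventually_gt_nhds (by linarith))
      filter_upwards [hev, self_mem_nhdsWithin] with x hx1 hx2
      have hx0 : (0:ℝ) < x := hx2
      have hsl : slope w 0 x = w x / x := by
        rw [slope_def_field, ← hw00, sub_zero, sub_zero]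
      rw [hsl, lt_div_iff₀ hx0] at hx1
      linarith
    · -- w 0 > 0
      refine ⟨w 0 / 2, by linarith, ?_⟩
      have hev : ∀ᶠ x in nhdsWithin (0:ℝ) (Set.Ioi 0), w 0 / 2 < w x :=
        hwtend.eventually (eventually_gt_nhds (by linarith))
      filter_upwards [hev, hIoc_mem] with x hx1 hx2
      nlinarith [hx2.2, hx2.1, hx1]
  -- limit of the boundary term at 0+
  have hRtend : Filter.Tendsto (fun ε => ∫ x in (0:ℝ)..ε, g x ^ 2)
      (nhdsWithin (0:ℝ) (Set.Ioi 0)) (nhds 0) := by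
    have hc := intervalIntegral.continuousOn_primitive_interval' hg (left_mem_uIcc (a := (0:ℝ)) (b := 1))
    have := (hc 0 (left_mem_uIcc)).tendsto
    rw [intervalIntegral.integral_same] at this
    refine this.mono_left (nhdsWithin_le_of_mem ?_)
    rw [huI]; exact hIcc_mem
  have hsq : Filter.Tendsto (fun ε => h ε ^ 2 / ε) (nhdsWithin (0:ℝ) (Set.Ioi 0)) (nhds 0) := by
    refine tendsto_of_tendsto_of_tendsto_of_le_of_le' tendsto_const_nhds hRtend ?_ ?_
    · filter_upwards [self_mem_nhdsWithin] with x (hx : (0:ℝ) < x)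
      positivity
    · filter_upwards [hIoc_mem] with x hx
      rw [div_le_iff₀ hx.1, mul_comm]
      exact hCS x hx
  have hFlim : Filter.Tendsto (fun ε => P ε * h ε ^ 2 / w ε)
      (nhdsWithin (0:ℝ) (Set.Ioi 0)) (nhds 0) := by
    obtain ⟨c, hc, hev⟩ := hlow
    set C : ℝ := |p 0 * d| + 1 with hC_def
    have hCpos : 0 < C := by positivity
    have hPbd : ∀ᶠ x in nhdsWithin (0:ℝ) (Set.Ioi 0), |P x| ≤ C := by
      have habs : Filter.Tendsto (fun x => |P x|) (nhdsWithin (0:ℝ) (Set.Ioi 0))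
        (nhds |p 0 * d|) := hPtend.abs
      exact habs.eventually (eventually_le_nhds (lt_add_one _))
    have ha : Filter.Tendsto (fun ε => C / c * (h ε ^ 2 / ε))
        (nhdsWithin (0:ℝ) (Set.Ioi 0)) (nhds 0) := by
      simpa using hsq.const_mul (C / c)
    refine squeeze_zero_norm' ?_ ha
    filter_upwards [hev, hIoc_mem, hPbd] with ε h1 h2 h3
    have hε0 : 0 < ε := h2.1
    have hwε : 0 < w ε := hwpos ε h2
    have hcε : 0 < c * ε := by positivity
    have hdd : h ε ^ 2 / w ε ≤ h ε ^ 2 / (c * ε) :=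
      div_le_div_of_nonneg_left (sq_nonneg _) hcε h1
    have e1 : ‖P ε * h ε ^ 2 / w ε‖ = |P ε| * (h ε ^ 2 / w ε) := by
      rw [Real.norm_eq_abs, mul_div_assoc, abs_mul,
        abs_of_nonneg (by positivity : (0:ℝ) ≤ h ε ^ 2 / w ε)]
    rw [e1]
    calc |P ε| * (h ε ^ 2 / w ε) ≤ C * (h ε ^ 2 / (c * ε)) :=
          mul_le_mul h3 hdd (by positivity) hCpos.le
      _ = C / c * (h ε ^ 2 / ε) := by
          field_simp
  -- the Picone identity on [ε,1]
  set Q : ℝ → ℝ := fun x => p x * (g x - deriv w x / w x * h x) ^ 2 with hQ_def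
  set XX : ℝ → ℝ := fun x => h x ^ 2 / x ^ (2 - q) with hXX_def
  have hhcOn : ∀ s : Set ℝ, s ⊆ Set.Icc 0 1 → ContinuousOn h s :=
    fun s hs x hx => (hhc x (hs hx)).continuousWithinAt
  have hstar : ∀ ε ∈ Set.Ioo (0:ℝ) 1,
      IntervalIntegrable Q volume ε 1 ∧
      IntervalIntegrable XX volume ε 1 ∧
      (∫ x in ε..1, Q x) = (∫ x in ε..1, p x * g x ^ 2) - (∫ x in ε..1, XX x)
        + P ε * h ε ^ 2 / w ε := by
    intro ε hε
    have hsub : Set.Icc ε 1 ⊆ Set.Ioc 0 1 := fun z hz => ⟨lt_of_lt_of_le hε.1 hz.1, hz.2⟩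
    have hsub' : Set.Icc ε 1 ⊆ Set.Icc 0 1 := hsub.trans Set.Ioc_subset_Icc_self
    have huIε : Set.uIcc ε 1 = Set.Icc ε 1 := Set.uIcc_of_le hε.2.le
    have hmono : Set.uIcc ε 1 ⊆ Set.uIcc (0:ℝ) 1 := by rw [huIε, huI]; exact hsub'
    have hga : IntervalIntegrable g volume ε 1 := hgI.mono_set hmono
    have hg2a : IntervalIntegrable (fun x => g x ^ 2) volume ε 1 := hg.mono_set hmono
    have hpg2a : IntervalIntegrable (fun x => p x * g x ^ 2) volume ε 1 := hpg2.mono_set hmono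
    have hwcOn : ContinuousOn w (Set.Icc ε 1) := hw1.continuousOn.mono hsub'
    have hwne : ∀ x ∈ Set.Icc ε 1, w x ≠ 0 := fun x hx => (hwpos x (hsub hx)).ne'
    have hrc : ContinuousOn (fun x => deriv w x / w x) (Set.Icc ε 1) :=
      (hw'c.mono hsub).div hwcOn hwne
    have hpcε : ContinuousOn p (Set.Icc ε 1) := hp.mono hsub'
    have hQint : IntervalIntegrable Q volume ε 1 := by
      have eQ : Q = fun x => ((fun y => 2 * (p y * (deriv w y / w y) * h y)) x * g x) * (-1)
          + ((fun y => p y * g y ^ 2) x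
          + (fun y => p y * (deriv w y / w y) ^ 2 * h y ^ 2) x) := by
        funext x; simp only [hQ_def]; ring
      rw [eQ]
      refine IntervalIntegrable.add ?_ (hpg2a.add ?_)
      · have hcont2 : ContinuousOn (fun y => 2 * (p y * (deriv w y / w y) * h y))
            (Set.uIcc ε 1) := by
          rw [huIε]
          exact continuousOn_const.mul ((hpcε.mul hrc).mul (hhcOn _ hsub'))
        exact (hga.continuousOn_mul hcont2).mul_const _
      · refine ContinuousOn.intervalIntegrable ?_
        rw [huIε]
        exact (hpcε.mul (hrc.pow 2)).mul ((hhcOn _ hsub').pow 2)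
    have hXc : ContinuousOn XX (Set.Icc ε 1) := by
      refine ((hhcOn _ hsub').pow 2).div ?_ ?_
      · exact fun x hx => (Real.continuousAt_rpow_const x _
          (Or.inl (ne_of_gt (lt_of_lt_of_le hε.1 hx.1)))).continuousWithinAt
      · exact fun x hx => (hX x (lt_of_lt_of_le hε.1 hx.1)).ne'
    have hXint : IntervalIntegrable XX volume ε 1 :=
      ContinuousOn.intervalIntegrable (by rw [huIε]; exact hXc)
    -- FTC for F = P h² / w
    set F : ℝ → ℝ := fun x => P x * h x ^ 2 / w x with hF_def
    set F' : ℝ → ℝ := fun x => (fun y => p y * g y ^ 2) x - XX x - Q x with hF'_def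
    have hcontF : ContinuousOn F (Set.Icc ε 1) :=
      ((hPc.mono hsub).mul ((hhcOn _ hsub').pow 2)).div hwcOn hwne
    have hderivF : ∀ x ∈ Set.Ioo ε 1, HasDerivWithinAt F (F' x) (Set.Ioi x) x := by
      intro x hx
      have hx' : x ∈ Set.Ioc (0:ℝ) 1 := ⟨lt_trans hε.1 hx.1, hx.2.le⟩
      have hx'' : x ∈ Set.Ioo (0:ℝ) 1 := ⟨lt_trans hε.1 hx.1, hx.2⟩
      have hwx : w x ≠ 0 := (hwpos x hx').ne'
      have hXx : (x : ℝ) ^ (2 - q) ≠ 0 := (hX x hx'.1).ne'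
      have hh2 : HasDerivAt (fun y => h y ^ 2) (2 * h x * g x) x := by
        have := (hd x ⟨hx'.1.le, hx'.2⟩).pow 2
        exact (by simpa [pow_one] using this : HasDerivAt (h ^ 2) (2 * h x * g x) x)
      have H : HasDerivAt F
          ((((-(w x / x ^ (2 - q))) * h x ^ 2 + P x * (2 * h x * g x)) * w x
            - P x * h x ^ 2 * deriv w x) / w x ^ 2) x :=
        ((hPd x hx').mul hh2).div (hwD x hx'') hwx
      refine (H.congr_deriv ?_).hasDerivWithinAt
      simp only [hF'_def, hXX_def, hQ_def, hP_def]
      field_simp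
      ring
    have hF'int : IntervalIntegrable F' volume ε 1 := (hpg2a.sub hXint).sub hQint
    have hFTC2 := intervalIntegral.integral_eq_sub_of_hasDeriv_right_of_le hε.2.le
      hcontF hderivF hF'int
    have hF1 : F 1 = 0 := by simp [hF_def, h1]
    rw [hF1, zero_sub] at hFTC2
    have hsplit : (∫ x in ε..1, F' x)
        = (∫ x in ε..1, p x * g x ^ 2) - (∫ x in ε..1, XX x) - (∫ x in ε..1, Q x) := by
      simp only [hF'_def]
      rw [intervalIntegral.integral_sub (hpg2a.sub hXint) hQint,
        intervalIntegral.integral_sub hpg2a hXint]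
    rw [hsplit] at hFTC2
    refine ⟨hQint, hXint, ?_⟩
    have : F ε = P ε * h ε ^ 2 / w ε := rfl
    linarith [hFTC2]
  set A : ℝ := ∫ x in (0:ℝ)..1, p x * g x ^ 2 with hA_def
  have hpgnn : ∀ x ∈ Set.Icc (0:ℝ) 1, 0 ≤ p x * g x ^ 2 :=
    fun x hx => mul_nonneg (hppos x hx).le (sq_nonneg _)
  have hQnn : ∀ x ∈ Set.Icc (0:ℝ) 1, 0 ≤ Q x :=
    fun x hx => mul_nonneg (hppos x hx).le (sq_nonneg _)
  have hAbound : ∀ ε ∈ Set.Ioo (0:ℝ) 1, (∫ x in ε..1, p x * g x ^ 2) ≤ A := by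
    intro ε hε
    have hm1 : Set.uIcc (0:ℝ) ε ⊆ Set.uIcc (0:ℝ) 1 := hsub01 ε ⟨hε.1, hε.2.le⟩
    have hm2 : Set.uIcc ε 1 ⊆ Set.uIcc (0:ℝ) 1 := by
      rw [Set.uIcc_of_le hε.2.le, huI]
      exact fun z hz => ⟨le_trans hε.1.le hz.1, hz.2⟩
    have hadd := intervalIntegral.integral_add_adjacent_intervals
      (hpg2.mono_set hm1) (hpg2.mono_set hm2)
    have hnn : 0 ≤ ∫ x in (0:ℝ)..ε, p x * g x ^ 2 :=
      intervalIntegral.integral_nonneg hε.1.le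
        (fun u hu => hpgnn u ⟨hu.1, le_trans hu.2 hε.2.le⟩)
    rw [hA_def, ← hadd]
    linarith
  -- integrability of XX on (0,1]
  have hXXnn : ∀ x ∈ Set.Ioc (0:ℝ) 1, 0 ≤ XX x := by
    intro x hx
    have := hX x hx.1
    simp only [hXX_def]
    positivity
  have hFev : ∀ᶠ ε in nhdsWithin (0:ℝ) (Set.Ioi 0), P ε * h ε ^ 2 / w ε ≤ 1 :=
    hFlim.eventually (eventually_le_nhds one_pos)
  set a : ℕ → ℝ := fun n => 1 / (n + 2) with ha_def
  have han : ∀ n : ℕ, a n ∈ Set.Ioo (0:ℝ) 1 := by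
    intro n
    constructor
    · positivity
    · rw [div_lt_one (by positivity)]
      have : (0:ℝ) ≤ (n:ℝ) := Nat.cast_nonneg n
      linarith
  have hatend : Filter.Tendsto a Filter.atTop (nhdsWithin (0:ℝ) (Set.Ioi 0)) := by
    refine tendsto_nhdsWithin_of_tendsto_nhds_of_eventually_within _ ?_
      (Filter.Eventually.of_forall fun n => (han n).1)
    have h2 : Filter.Tendsto (fun n : ℕ => ((n:ℝ) + 2)) Filter.atTop Filter.atTop :=
      Filter.tendsto_atTop_add_const_right _ 2 tendsto_natCast_atTop_atTop
    simpa [ha_def, Pi.inv_def] using h2.inv_tendsto_atTop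
  have hXXint : IntegrableOn XX (Set.Ioc 0 1) volume := by
    refine MeasureTheory.integrableOn_Ioc_of_intervalIntegral_norm_bounded_left
      (I := A + 1) (fun n => ?_) (hatend.mono_right nhdsWithin_le_nhds) ?_
    · exact (intervalIntegrable_iff_integrableOn_Ioc_of_le (han n).2.le).1 (hstar _ (han n)).2.1
    · filter_upwards [hatend.eventually hFev] with n hFn
      obtain ⟨hQi, hXi, hid⟩ := hstar _ (han n)
      have hQnn' : 0 ≤ ∫ x in (a n)..1, Q x :=
        intervalIntegral.integral_nonneg (han n).2.le
          (fun u hu => hQnn u ⟨le_trans (han n).1.le hu.1, hu.2⟩)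
      have hnrm : (∫ x in Set.Ioc (a n) 1, ‖XX x‖) = ∫ x in (a n)..1, XX x := by
        rw [intervalIntegral.integral_of_le (han n).2.le]
        refine setIntegral_congr_fun measurableSet_Ioc ?_
        intro x hx
        exact Real.norm_of_nonneg (hXXnn x ⟨lt_trans (han n).1 hx.1, hx.2⟩)
      rw [hnrm]
      have := hAbound _ (han n)
      linarith
  -- both one-sided integrals tend to A
  have hXuIcc : IntegrableOn XX (Set.uIcc (0:ℝ) 1) volume := by
    rw [huI]
    exact (integrableOn_Icc_iff_integrableOn_Ioc enorm_ne_top).2 hXXint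
  have hXtend : Filter.Tendsto (fun ε => ∫ x in ε..1, XX x)
      (nhdsWithin (0:ℝ) (Set.Ioi 0)) (nhds A) := by
    have hc := intervalIntegral.continuousOn_primitive_interval_left hXuIcc
    have h0' := (hc 0 (left_mem_uIcc)).tendsto
    have : (∫ t in (0:ℝ)..1, XX t) = A := heq.symm
    rw [this] at h0'
    refine h0'.mono_left (nhdsWithin_le_of_mem ?_)
    rw [huI]; exact hIcc_mem
  have hPGtend : Filter.Tendsto (fun ε => ∫ x in ε..1, p x * g x ^ 2)
      (nhdsWithin (0:ℝ) (Set.Ioi 0)) (nhds A) := by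
    have hPGuIcc : IntegrableOn (fun x => p x * g x ^ 2) (Set.uIcc (0:ℝ) 1) volume := by
      rw [huI]
      exact (integrableOn_Icc_iff_integrableOn_Ioc enorm_ne_top).2
        ((intervalIntegrable_iff_integrableOn_Ioc_of_le zero_le_one).1 hpg2)
    have hc := intervalIntegral.continuousOn_primitive_interval_left hPGuIcc
    have h0' := (hc 0 (left_mem_uIcc)).tendsto
    refine (h0'.mono_left (nhdsWithin_le_of_mem ?_))
    rw [huI]; exact hIcc_mem
  have hQtend : Filter.Tendsto (fun ε => ∫ x in ε..1, Q x)
      (nhdsWithin (0:ℝ) (Set.Ioi 0)) (nhds 0) := by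
    have := (hPGtend.sub hXtend).add hFlim
    rw [sub_self, zero_add] at this
    refine this.congr' ?_
    filter_upwards [hIoo_mem] with ε hε
    exact ((hstar ε hε).2.2).symm
  -- ∫_ε^1 Q = 0 for every ε
  have hQzero : ∀ ε ∈ Set.Ioo (0:ℝ) 1, (∫ x in ε..1, Q x) = 0 := by
    intro ε hε
    have hub : (∫ x in ε..1, Q x) ≤ 0 := by
      refine ge_of_tendsto hQtend ?_
      filter_upwards [Ioo_mem_nhdsGT_of_mem (Set.mem_Ico.2 ⟨le_rfl, hε.1⟩)] with δ hδ
      have hδ' : δ ∈ Set.Ioo (0:ℝ) 1 := ⟨hδ.1, lt_trans hδ.2 hε.2⟩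
      have hQδ := (hstar δ hδ').1
      have hm1 : Set.uIcc δ ε ⊆ Set.uIcc δ 1 := by
        rw [Set.uIcc_of_le hδ.2.le, Set.uIcc_of_le hδ'.2.le]
        exact Set.Icc_subset_Icc le_rfl hε.2.le
      have hm2 : Set.uIcc ε 1 ⊆ Set.uIcc δ 1 := by
        rw [Set.uIcc_of_le hε.2.le, Set.uIcc_of_le hδ'.2.le]
        exact Set.Icc_subset_Icc hδ.2.le le_rfl
      have hadd := intervalIntegral.integral_add_adjacent_intervals
        (hQδ.mono_set hm1) (hQδ.mono_set hm2)
      have hnn : 0 ≤ ∫ x in δ..ε, Q x :=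
        intervalIntegral.integral_nonneg hδ.2.le
          (fun u hu => hQnn u ⟨le_trans hδ.1.le hu.1, le_trans hu.2 hε.2.le⟩)
      rw [← hadd]
      linarith
    have hlb : 0 ≤ ∫ x in ε..1, Q x :=
      intervalIntegral.integral_nonneg hε.2.le
        (fun u hu => hQnn u ⟨le_trans hε.1.le hu.1, hu.2⟩)
    linarith
  -- hence h vanishes on (0,1)
  have hvanish : ∀ ε ∈ Set.Ioo (0:ℝ) 1, h ε = 0 := by
    intro ε hε
    -- Q = 0 a.e. on Ioc ε 1
    have hQint : IntegrableOn Q (Set.Ioc ε 1) volume :=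
      (intervalIntegrable_iff_integrableOn_Ioc_of_le hε.2.le).1 (hstar ε hε).1
    have hae : Q =ᵐ[volume.restrict (Set.Ioc ε 1)] 0 := by
      refine (MeasureTheory.integral_eq_zero_iff_of_nonneg_ae ?_ hQint).1 ?_
      · filter_upwards [ae_restrict_mem measurableSet_Ioc] with x hx
        exact hQnn x ⟨le_trans hε.1.le hx.1.le, hx.2⟩
      · have := hQzero ε hε
        rwa [intervalIntegral.integral_of_le hε.2.le] at this
    set v' : ℝ → ℝ := fun x => (g x * w x - h x * deriv w x) / w x ^ 2 with hv'_def
    have hv'ae : v' =ᵐ[volume.restrict (Set.Ioc ε 1)] 0 := by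
      filter_upwards [hae, ae_restrict_mem measurableSet_Ioc] with x hQx hx
      have hx' : x ∈ Set.Ioc (0:ℝ) 1 := ⟨lt_of_lt_of_le hε.1 hx.1.le, hx.2⟩
      have hwx : w x ≠ 0 := (hwpos x hx').ne'
      have hpx : p x ≠ 0 := hpne x hx'
      have hQx' : (g x - deriv w x / w x * h x) ^ 2 = 0 := by
        have : p x * (g x - deriv w x / w x * h x) ^ 2 = 0 := hQx
        exact (mul_eq_zero.1 this).resolve_left hpx
      have hgx : g x - deriv w x / w x * h x = 0 := by
        exact pow_eq_zero_iff (n := 2) (by norm_num) |>.1 hQx'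
      have : g x * w x - h x * deriv w x = 0 := by
        have := hgx
        field_simp at this
        linarith [this]
      simp only [hv'_def, this, zero_div, Pi.zero_apply]
    have hv'int : IntervalIntegrable v' volume ε 1 := by
      rw [intervalIntegrable_iff_integrableOn_Ioc_of_le hε.2.le]
      exact (MeasureTheory.integrable_zero _ _ _).congr hv'ae.symm
    have hsubε : Set.Icc ε 1 ⊆ Set.Ioc 0 1 := fun z hz => ⟨lt_of_lt_of_le hε.1 hz.1, hz.2⟩
    have hsubε' : Set.Icc ε 1 ⊆ Set.Icc 0 1 := hsubε.trans Set.Ioc_subset_Icc_self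
    have hvcont : ContinuousOn (fun x => h x / w x) (Set.Icc ε 1) :=
      (hhcOn _ hsubε').div (hw1.continuousOn.mono hsubε')
        (fun x hx => (hwpos x (hsubε hx)).ne')
    have hvd : ∀ x ∈ Set.Ioo ε 1, HasDerivWithinAt (fun x => h x / w x) (v' x)
        (Set.Ioi x) x := by
      intro x hx
      have hx'' : x ∈ Set.Ioo (0:ℝ) 1 := ⟨lt_trans hε.1 hx.1, hx.2⟩
      exact (((hd x ⟨hx''.1.le, hx''.2.le⟩).div (hwD x hx'')
        (hwpos x ⟨hx''.1, hx''.2.le⟩).ne')).hasDerivWithinAt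
    have hFTCv := intervalIntegral.integral_eq_sub_of_hasDeriv_right_of_le hε.2.le
      hvcont hvd hv'int
    have hz : (∫ x in ε..1, v' x) = 0 := by
      rw [intervalIntegral.integral_of_le hε.2.le]
      exact MeasureTheory.integral_eq_zero_of_ae hv'ae
    rw [hz, h1, zero_div] at hFTCv
    have : h ε / w ε = 0 := by linarith [hFTCv]
    have hwε : w ε ≠ 0 := (hwpos ε ⟨hε.1, hε.2.le⟩).ne'
    field_simp at this
    simpa using this
  -- conclusion
  intro x hx
  rcases eq_or_lt_of_le hx.1 with h0x | h0x
  · rw [← h0x]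
    exact h0
  rcases eq_or_lt_of_le hx.2 with h1x | h1x
  · rw [h1x]; exact h1
  exact hvanish x ⟨h0x, h1x⟩
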